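/- The extrapolation q(1) is exact for cubics: if u is any polynomial of degree at most 3 and ū_{M−j} are its cell averages over I_{M−j}, then (25ū_M − 23ū_{M−1} + 13ū_{M−2} − 3ū_{M−3})/12 = u(1) and (35ū_M − 69ū_{M−1} + 45ū_{M−2} − 11ū_{M−3})/(12h) = u'(1). -/

import Mathlib

open intervalIntegral

lemma cubic_integral (c0 c1 c2 c3 a b : ℝ) :
    ∫ x in a..b, (c0 + c1 * x + c2 * x ^ 2 + c3 * x ^ 3) =
      c0 * (b - a) + c1 * (b ^ 2 - a ^ 2) / 2 + c2 * (b ^ 3 - a ^ 3) / 3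
        + c3 * (b ^ 4 - a ^ 4) / 4 := by
  have I : ∀ n : ℕ, IntervalIntegrable (fun x : ℝ => x ^ n) MeasureTheory.volume a b :=
    fun n => (continuous_pow n).intervalIntegrable a b
  rw [intervalIntegral.integral_add (((_root_.intervalIntegrable_const).add
        (intervalIntegrable_id.const_mul c1)).add ((I 2).const_mul c2)) ((I 3).const_mul c3),
      intervalIntegral.integral_add ((_root_.intervalIntegrable_const).add
        (intervalIntegrable_id.const_mul c1)) ((I 2).const_mul c2),
      intervalIntegral.integral_add (_root_.intervalIntegrable_const) (intervalIntegrable_id.const_mul c1),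
      intervalIntegral.integral_const_mul, intervalIntegral.integral_const_mul,
      intervalIntegral.integral_const_mul, integral_const]
  simp [integral_pow]
  ring

/-- The extrapolation formulas are exact for polynomials of degree ≤ 3. -/
theorem extrapolation_exact_for_cubics (h : ℝ) (hh : 0 < h)
    (u : Polynomial ℝ) (hu : u.natDegree ≤ 3) (ub : ℕ → ℝ)
    (H : ∀ j : ℕ, j ≤ 3 →
      ub j = (1 / h) * ∫ x in (1 - ((j : ℝ) + 1) * h)..(1 - (j : ℝ) * h), u.eval x) :
    (25 * ub 0 - 23 * ub 1 + 13 * ub 2 - 3 * ub 3) / 12 = u.eval 1 ∧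
    (35 * ub 0 - 69 * ub 1 + 45 * ub 2 - 11 * ub 3) / (12 * h) = u.derivative.eval 1 := by
  set c0 := u.coeff 0
  set c1 := u.coeff 1
  set c2 := u.coeff 2
  set c3 := u.coeff 3
  have heval : ∀ x : ℝ, u.eval x = c0 + c1 * x + c2 * x ^ 2 + c3 * x ^ 3 := by
    intro x
    rw [Polynomial.eval_eq_sum_range' (lt_of_le_of_lt hu (by norm_num : (3:ℕ) < 4))]
    simp [Finset.sum_range_succ, mul_comm]
    rfl
  have hd : u.derivative.eval 1 = c1 + 2 * c2 + 3 * c3 := by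
    have h4 : u.coeff 4 = 0 := Polynomial.coeff_eq_zero_of_natDegree_lt (by omega)
    rw [Polynomial.eval_eq_sum_range' (n := 4)
      (lt_of_le_of_lt (Polynomial.natDegree_derivative_le u) (by omega))]
    simp [Finset.sum_range_succ, Polynomial.coeff_derivative, c1, c2, c3, h4]
    ring
  have hub : ∀ j : ℕ, j ≤ 3 → ub j = (1 / h) *
      (c0 * h + c1 * ((1 - j*h) ^ 2 - (1 - (j+1)*h) ^ 2) / 2
        + c2 * ((1 - j*h) ^ 3 - (1 - (j+1)*h) ^ 3) / 3
        + c3 * ((1 - j*h) ^ 4 - (1 - (j+1)*h) ^ 4) / 4) := by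
    intro j hj
    rw [H j hj]
    congr 1
    simp only [heval]
    rw [cubic_integral]
    ring_nf
  have h0 := hub 0 (by norm_num)
  have h1 := hub 1 (by norm_num)
  have h2 := hub 2 (by norm_num)
  have h3 := hub 3 (by norm_num)
  norm_num at h0 h1 h2 h3
  rw [h0, h1, h2, h3, heval, hd]
  constructor <;> field_simp <;> ring
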